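/- (Theorem 1, contraction step) Let n ≥ n', let A be a real symmetric n×n matrix, A' a real symmetric n'×n' matrix, K a real n×n' matrix, λ ≥ 0, α ∈ [0,1], and let ε > 0 satisfy ‖A‖₂·‖A'‖₂ < ε, where ‖·‖₂ denotes the spectral (ℓ₂ operator) norm. Given any real n×n' matrix X⁽⁰⁾, define the sequence X⁽ᵗ⁺¹⁾ = (1−α)X⁽ᵗ⁾ + α·P_d(A X⁽ᵗ⁾ A' + λK). Then for all t ≥ 1, ‖X⁽ᵗ⁺¹⁾ − X⁽ᵗ⁾‖_F ≤ (1−α+αε)·‖X⁽ᵗ⁾ − X⁽ᵗ⁻¹⁾‖_F. -/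

import Mathlib

/-- The Frobenius norm of a real matrix. -/
noncomputable def frobNorm {m p : Type*} [Fintype m] [Fintype p] (A : Matrix m p ℝ) : ℝ :=
  Real.sqrt (∑ i, ∑ j, (A i j) ^ 2)

/-- The spectral (ℓ₂ operator) norm of a real square matrix. -/
noncomputable def specNorm {m : Type*} [Fintype m] [DecidableEq m] (A : Matrix m m ℝ) : ℝ :=
  ‖Matrix.toEuclideanCLM (𝕜 := ℝ) A‖

/-- `Omega n n'` is the set of partial doubly stochastic matrices: real `n × n'` matrices
with row sums at most 1, column sums equal to 1, and nonnegative entries. -/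
def Omega (n n' : ℕ) : Set (Matrix (Fin n) (Fin n') ℝ) :=
  {X | (∀ i, ∑ j, X i j ≤ 1) ∧ (∀ j, ∑ i, X i j = 1) ∧ (∀ i j, 0 ≤ X i j)}

namespace FastPFPAux

open Matrix

variable {n n' : ℕ}

/-- The linear equivalence between matrices and Euclidean space. -/
noncomputable def toEL (n n' : ℕ) :
    Matrix (Fin n) (Fin n') ℝ ≃ₗ[ℝ] EuclideanSpace ℝ (Fin n × Fin n') where
  toFun X := (WithLp.equiv 2 _).symm (fun p => X p.1 p.2)
  invFun v := fun i j => v (i, j)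
  map_add' _ _ := rfl
  map_smul' _ _ := rfl
  left_inv _ := rfl
  right_inv _ := rfl

lemma frobNorm_eq (X : Matrix (Fin n) (Fin n') ℝ) : frobNorm X = ‖toEL n n' X‖ := by
  rw [frobNorm, EuclideanSpace.norm_eq]
  congr 1
  rw [Fintype.sum_prod_type]
  simp [toEL, sq_abs]
  rfl

lemma frobNorm_nonneg (X : Matrix (Fin n) (Fin n') ℝ) : 0 ≤ frobNorm X :=
  Real.sqrt_nonneg _

lemma omega_convex : Convex ℝ (Omega n n') := by
  intro X hX Y hY a b ha hb hab
  refine ⟨fun i => ?_, fun j => ?_, fun i j => ?_⟩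
  · simp only [Matrix.add_apply, Matrix.smul_apply, smul_eq_mul, Finset.sum_add_distrib,
      ← Finset.mul_sum]
    calc a * ∑ j, X i j + b * ∑ j, Y i j ≤ a * 1 + b * 1 := by
          gcongr
          · exact hX.1 i
          · exact hY.1 i
      _ = 1 := by linarith
  · simp only [Matrix.add_apply, Matrix.smul_apply, smul_eq_mul, Finset.sum_add_distrib,
      ← Finset.mul_sum, hX.2.1 j, hY.2.1 j]
    linarith
  · have := hX.2.2 i j
    have := hY.2.2 i j
    simp only [Matrix.add_apply, Matrix.smul_apply, smul_eq_mul]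
    positivity

open RealInnerProductSpace in
/-- Nonexpansiveness of metric projections onto a convex set in a real inner product space. -/
lemma proj_nonexpansive {F : Type*} [NormedAddCommGroup F] [InnerProductSpace ℝ F]
    {K : Set F} (hK : Convex ℝ K) {u₁ u₂ v₁ v₂ : F} (hv₁ : v₁ ∈ K) (hv₂ : v₂ ∈ K)
    (h₁ : ∀ w ∈ K, ‖u₁ - v₁‖ ≤ ‖u₁ - w‖) (h₂ : ∀ w ∈ K, ‖u₂ - v₂‖ ≤ ‖u₂ - w‖) :
    ‖v₁ - v₂‖ ≤ ‖u₁ - u₂‖ := by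
  have key : ∀ (u v : F), v ∈ K → (∀ w ∈ K, ‖u - v‖ ≤ ‖u - w‖) →
      ∀ w ∈ K, ⟪u - v, w - v⟫ ≤ 0 := by
    intro u v hv hmin
    rw [← norm_eq_iInf_iff_real_inner_le_zero hK hv]
    haveI : Nonempty K := ⟨⟨v, hv⟩⟩
    refine le_antisymm (le_ciInf fun w => hmin w w.2) ?_
    exact ciInf_le ⟨0, fun x hx => by rcases hx with ⟨w, rfl⟩; positivity⟩ (⟨v, hv⟩ : K)
  have k1 : ⟪u₁ - v₁, v₂ - v₁⟫ ≤ 0 := key u₁ v₁ hv₁ h₁ v₂ hv₂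
  have k2 : ⟪u₂ - v₂, v₁ - v₂⟫ ≤ 0 := key u₂ v₂ hv₂ h₂ v₁ hv₁
  have hcs : ⟪u₁ - u₂, v₁ - v₂⟫ ≤ ‖u₁ - u₂‖ * ‖v₁ - v₂‖ := real_inner_le_norm _ _
  have hsq : ‖v₁ - v₂‖ ^ 2 ≤ ⟪u₁ - u₂, v₁ - v₂⟫ := by
    have hns : ‖v₁ - v₂‖ ^ 2 = ⟪v₁ - v₂, v₁ - v₂⟫ := (real_inner_self_eq_norm_sq _).symm
    have e1 : ⟪u₁ - v₁, v₂ - v₁⟫ = - ⟪u₁ - v₁, v₁ - v₂⟫ := by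
      rw [← inner_neg_right]; congr 1; abel
    rw [e1] at k1
    have expand : ⟪u₁ - u₂, v₁ - v₂⟫ = ⟪v₁ - v₂, v₁ - v₂⟫ + ⟪u₁ - v₁, v₁ - v₂⟫
        + ⟪u₂ - v₂, v₂ - v₁⟫ := by
      have : u₁ - u₂ = (v₁ - v₂) + (u₁ - v₁) + (-(u₂ - v₂)) := by abel
      rw [this, inner_add_left, inner_add_left, inner_neg_left, ← inner_neg_right]
      congr 2
      abel
    have e2 : ⟪u₂ - v₂, v₂ - v₁⟫ = - ⟪u₂ - v₂, v₁ - v₂⟫ := by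
      rw [← inner_neg_right]; congr 1; abel
    rw [e2] at expand
    linarith
  rcases eq_or_lt_of_le (norm_nonneg (v₁ - v₂)) with h0 | h0
  · rw [← h0]; exact norm_nonneg _
  · nlinarith

lemma mulVec_norm_le (A : Matrix (Fin n) (Fin n) ℝ) (v : Fin n → ℝ) :
    ‖((WithLp.equiv 2 _).symm (A.mulVec v) : EuclideanSpace ℝ (Fin n))‖
      ≤ specNorm A * ‖((WithLp.equiv 2 _).symm v : EuclideanSpace ℝ (Fin n))‖ := by
  have h := (Matrix.toEuclideanCLM (𝕜 := ℝ) A).le_opNorm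
    ((WithLp.equiv 2 _).symm v : EuclideanSpace ℝ (Fin n))
  have heq : Matrix.toEuclideanCLM (𝕜 := ℝ) A ((WithLp.equiv 2 _).symm v)
      = ((WithLp.equiv 2 _).symm (A.mulVec v) : EuclideanSpace ℝ (Fin n)) := by
    have := Matrix.toEuclideanCLM_toLp (𝕜 := ℝ) A v
    simpa [Matrix.toLin'_apply] using this
  rw [heq] at h
  exact h

lemma sum_sq_eq_norm_sq (v : Fin n → ℝ) :
    ∑ i, v i ^ 2 = ‖((WithLp.equiv 2 _).symm v : EuclideanSpace ℝ (Fin n))‖ ^ 2 := by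
  rw [EuclideanSpace.norm_eq, Real.sq_sqrt (by positivity)]
  simp [sq_abs]

lemma frobNorm_mul_le (A : Matrix (Fin n) (Fin n) ℝ) (M : Matrix (Fin n) (Fin n') ℝ) :
    frobNorm (A * M) ≤ specNorm A * frobNorm M := by
  have hAnn : 0 ≤ specNorm A := norm_nonneg _
  have key : ∀ j, ∑ i, ((A * M) i j) ^ 2 ≤ specNorm A ^ 2 * ∑ i, (M i j) ^ 2 := by
    intro j
    have hc : (fun i => (A * M) i j) = A.mulVec (fun k => M k j) := by
      funext i
      simp [Matrix.mul_apply, Matrix.mulVec, dotProduct]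
    have h1 : ∑ i, ((A * M) i j) ^ 2
        = ‖((WithLp.equiv 2 _).symm (A.mulVec (fun k => M k j)) :
            EuclideanSpace ℝ (Fin n))‖ ^ 2 := by
      rw [← sum_sq_eq_norm_sq]
      exact Finset.sum_congr rfl fun i _ => by rw [show (A * M) i j = A.mulVec (fun k => M k j) i from congrFun hc i]
    rw [h1, sum_sq_eq_norm_sq]
    have h2 := mulVec_norm_le A (fun k => M k j)
    calc ‖((WithLp.equiv 2 _).symm (A.mulVec (fun k => M k j)) :
            EuclideanSpace ℝ (Fin n))‖ ^ 2
        ≤ (specNorm A * ‖((WithLp.equiv 2 _).symm (fun k => M k j) :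
            EuclideanSpace ℝ (Fin n))‖) ^ 2 := by
          exact pow_le_pow_left₀ (norm_nonneg _) h2 2
      _ = specNorm A ^ 2 * ‖((WithLp.equiv 2 _).symm (fun k => M k j) :
            EuclideanSpace ℝ (Fin n))‖ ^ 2 := by ring
  rw [frobNorm, frobNorm, Finset.sum_comm,
    Finset.sum_comm (s := Finset.univ) (t := Finset.univ) (f := fun i j => (M i j) ^ 2)]
  rw [show specNorm A * Real.sqrt (∑ j, ∑ i, (M i j) ^ 2)
      = Real.sqrt (specNorm A ^ 2 * ∑ j, ∑ i, (M i j) ^ 2) by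
    rw [Real.sqrt_mul (by positivity), Real.sqrt_sq hAnn]]
  apply Real.sqrt_le_sqrt
  rw [Finset.mul_sum]
  exact Finset.sum_le_sum fun j _ => key j

lemma frobNorm_transpose (M : Matrix (Fin n) (Fin n') ℝ) :
    frobNorm Mᵀ = frobNorm M := by
  rw [frobNorm, frobNorm, Finset.sum_comm]
  rfl

lemma specNorm_transpose (A : Matrix (Fin n') (Fin n') ℝ) (hA : A.IsSymm) :
    specNorm Aᵀ = specNorm A := by
  rw [hA]

lemma frobNorm_mul_right_le (A' : Matrix (Fin n') (Fin n') ℝ) (hA' : A'.IsSymm)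
    (M : Matrix (Fin n) (Fin n') ℝ) :
    frobNorm (M * A') ≤ specNorm A' * frobNorm M := by
  have h1 : frobNorm (M * A') = frobNorm (A'ᵀ * Mᵀ) := by
    rw [← Matrix.transpose_mul, frobNorm_transpose]
  rw [h1, hA']
  calc frobNorm (A' * Mᵀ) ≤ specNorm A' * frobNorm Mᵀ := frobNorm_mul_le A' Mᵀ
    _ = specNorm A' * frobNorm M := by rw [frobNorm_transpose]

end FastPFPAux

open FastPFPAux in
/-- (Theorem 1, contraction step) For the FastPFP iteration
`X⁽ᵗ⁺¹⁾ = (1−α)X⁽ᵗ⁾ + α·P_d(A X⁽ᵗ⁾ A' + λK)` with `‖A‖₂·‖A'‖₂ < ε`, one has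
`‖X⁽ᵗ⁺¹⁾ − X⁽ᵗ⁾‖_F ≤ (1−α+αε)·‖X⁽ᵗ⁾ − X⁽ᵗ⁻¹⁾‖_F` for all `t ≥ 1`. -/
theorem fastPFP_contraction_step (n n' : ℕ) (hn' : 0 < n') (hnn : n' ≤ n)
    (A : Matrix (Fin n) (Fin n) ℝ) (hA : A.IsSymm)
    (A' : Matrix (Fin n') (Fin n') ℝ) (hA' : A'.IsSymm)
    (K : Matrix (Fin n) (Fin n') ℝ) (lam : ℝ) (hlam : 0 ≤ lam)
    (α : ℝ) (hα : α ∈ Set.Icc (0 : ℝ) 1) (ε : ℝ) (hε : 0 < ε)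
    (hspec : specNorm A * specNorm A' < ε)
    (Pd : Matrix (Fin n) (Fin n') ℝ → Matrix (Fin n) (Fin n') ℝ)
    (hPd_mem : ∀ Y, Pd Y ∈ Omega n n')
    (hPd_min : ∀ Y, ∀ D ∈ Omega n n', frobNorm (Y - Pd Y) ≤ frobNorm (Y - D))
    (X : ℕ → Matrix (Fin n) (Fin n') ℝ)
    (hX : ∀ t, X (t + 1) = (1 - α) • X t + α • Pd (A * X t * A' + lam • K))
    (t : ℕ) (ht : 1 ≤ t) :
    frobNorm (X (t + 1) - X t) ≤ (1 - α + α * ε) * frobNorm (X t - X (t - 1)) := by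
  obtain ⟨hα0, hα1⟩ := hα
  set s := t - 1 with hs
  have hts : t = s + 1 := by omega
  set Δ := X t - X s with hΔ
  set Y1 := A * X t * A' + lam • K with hY1
  set Y0 := A * X s * A' + lam • K with hY0
  -- the image of Omega under toEL
  set S : Set (EuclideanSpace ℝ (Fin n × Fin n')) := (toEL n n') '' (Omega n n') with hS
  have hSconv : Convex ℝ S := omega_convex.linear_image (toEL n n').toLinearMap
  -- nonexpansiveness of Pd
  have hPd_nonexp : frobNorm (Pd Y1 - Pd Y0) ≤ frobNorm (Y1 - Y0) := by
    rw [frobNorm_eq, frobNorm_eq, map_sub, map_sub]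
    apply proj_nonexpansive hSconv (K := S)
      (Set.mem_image_of_mem _ (hPd_mem Y1)) (Set.mem_image_of_mem _ (hPd_mem Y0))
    · rintro w ⟨D, hD, rfl⟩
      rw [← map_sub, ← map_sub, ← frobNorm_eq, ← frobNorm_eq]
      exact hPd_min Y1 D hD
    · rintro w ⟨D, hD, rfl⟩
      rw [← map_sub, ← map_sub, ← frobNorm_eq, ← frobNorm_eq]
      exact hPd_min Y0 D hD
  -- the difference of the arguments
  have hYdiff : Y1 - Y0 = A * Δ * A' := by
    rw [hY1, hY0, hΔ, Matrix.mul_sub, Matrix.sub_mul]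
    abel
  have hfrobYdiff : frobNorm (Y1 - Y0) ≤ specNorm A * specNorm A' * frobNorm Δ := by
    rw [hYdiff]
    calc frobNorm (A * Δ * A') ≤ specNorm A' * frobNorm (A * Δ) :=
          frobNorm_mul_right_le A' hA' (A * Δ)
      _ ≤ specNorm A' * (specNorm A * frobNorm Δ) :=
          mul_le_mul_of_nonneg_left (frobNorm_mul_le A Δ) (norm_nonneg _)
      _ = specNorm A * specNorm A' * frobNorm Δ := by ring
  -- the iteration step
  have hXt : X t = (1 - α) • X s + α • Pd Y0 := by
    have := hX s
    rw [← hts] at this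
    rw [this, hY0]
  have hXsucc : X (t + 1) = (1 - α) • X t + α • Pd Y1 := by
    rw [hY1]; exact hX t
  have halg : ∀ P Q R T : Matrix (Fin n) (Fin n') ℝ,
      ((1 - α) • P + α • Q) - ((1 - α) • R + α • T) = (1 - α) • (P - R) + α • (Q - T) := by
    intros P Q R T
    module
  have hstep : X (t + 1) - X t = (1 - α) • Δ + α • (Pd Y1 - Pd Y0) := by
    conv_lhs => rw [hXsucc, hXt]
    rw [halg, ← hXt, hΔ]
  have hnorm : frobNorm (X (t + 1) - X t)
      ≤ (1 - α) * frobNorm Δ + α * frobNorm (Pd Y1 - Pd Y0) := by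
    rw [hstep, frobNorm_eq, map_add, map_smul, map_smul]
    calc ‖(1 - α) • toEL n n' Δ + α • toEL n n' (Pd Y1 - Pd Y0)‖
        ≤ ‖(1 - α) • toEL n n' Δ‖ + ‖α • toEL n n' (Pd Y1 - Pd Y0)‖ := norm_add_le _ _
      _ = (1 - α) * ‖toEL n n' Δ‖ + α * ‖toEL n n' (Pd Y1 - Pd Y0)‖ := by
          rw [norm_smul, norm_smul, Real.norm_eq_abs, Real.norm_eq_abs,
            abs_of_nonneg (by linarith), abs_of_nonneg hα0]
      _ = (1 - α) * frobNorm Δ + α * frobNorm (Pd Y1 - Pd Y0) := by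
          rw [frobNorm_eq, frobNorm_eq]
  have hfnn : 0 ≤ frobNorm Δ := frobNorm_nonneg Δ
  have hchain : frobNorm (Pd Y1 - Pd Y0) ≤ specNorm A * specNorm A' * frobNorm Δ :=
    le_trans hPd_nonexp hfrobYdiff
  calc frobNorm (X (t + 1) - X t)
      ≤ (1 - α) * frobNorm Δ + α * frobNorm (Pd Y1 - Pd Y0) := hnorm
    _ ≤ (1 - α) * frobNorm Δ + α * (specNorm A * specNorm A' * frobNorm Δ) := by
        gcongr
    _ ≤ (1 - α) * frobNorm Δ + α * (ε * frobNorm Δ) := by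
        have h1 : specNorm A * specNorm A' * frobNorm Δ ≤ ε * frobNorm Δ :=
          mul_le_mul_of_nonneg_right (le_of_lt hspec) hfnn
        have := mul_le_mul_of_nonneg_left h1 hα0
        linarith
    _ = (1 - α + α * ε) * frobNorm Δ := by ring
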